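/- Let n be a positive integer and let A be a complex symmetric n×n matrix (Aᵀ = A) with I − AᴴA positive definite. Set Λ = (I − AᴴA)^{−1/2} and Λ̄ = (I − AAᴴ)^{−1/2} (positive definite inverse square roots). Then the 2n×2n block matrix ι(A) = [[Λ, AᴴΛ̄], [AΛ, Λ̄]] is complex symplectic, i.e. ι(A)ᵀ J ι(A) = J with J = [[0, I], [−I, 0]]; moreover its lower-left block composed with the inverse of its upper-left block equals A, i.e. (AΛ)Λ⁻¹ = A. -/

import Mathlib

open Matrix
open scoped ComplexOrder

/-- For complex symmetric `A` with `I − AᴴA` positive definite, and with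
`Λ = (I − AᴴA)^{−1/2}`, `Λ̄ = (I − AAᴴ)^{−1/2}` the positive definite inverse square roots
(characterized by being positive definite with `Λ·Λ·(I − AᴴA) = I`, `Λ̄·Λ̄·(I − AAᴴ) = I`),
the block matrix `ι(A) = [[Λ, AᴴΛ̄], [AΛ, Λ̄]]` is complex symplectic and
`(AΛ)·Λ⁻¹ = A`. -/
theorem iota_is_symplectic (n : ℕ) (hn : 0 < n)
    (A Lam Lamb : Matrix (Fin n) (Fin n) ℂ)
    (hA : Aᵀ = A) (hApd : ((1 : Matrix (Fin n) (Fin n) ℂ) - Aᴴ * A).PosDef)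
    (hLam : Lam.PosDef)
    (hLamSq : Lam * Lam * ((1 : Matrix (Fin n) (Fin n) ℂ) - Aᴴ * A) = 1)
    (hLamb : Lamb.PosDef)
    (hLambSq : Lamb * Lamb * ((1 : Matrix (Fin n) (Fin n) ℂ) - A * Aᴴ) = 1) :
    ((fromBlocks Lam (Aᴴ * Lamb) (A * Lam) Lamb)ᵀ *
        fromBlocks (0 : Matrix (Fin n) (Fin n) ℂ) (1 : Matrix (Fin n) (Fin n) ℂ)
          (-1 : Matrix (Fin n) (Fin n) ℂ) (0 : Matrix (Fin n) (Fin n) ℂ) *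
        fromBlocks Lam (Aᴴ * Lamb) (A * Lam) Lamb =
      fromBlocks (0 : Matrix (Fin n) (Fin n) ℂ) (1 : Matrix (Fin n) (Fin n) ℂ)
        (-1 : Matrix (Fin n) (Fin n) ℂ) (0 : Matrix (Fin n) (Fin n) ℂ)) ∧
    (A * Lam) * Lam⁻¹ = A := by
  have hAH : (Aᴴ)ᵀ = Aᴴ := by
    have : (Aᴴ)ᵀ = (Aᵀ)ᴴ := rfl
    rw [this, hA]
  have hLinv : Lam⁻¹ = Lam * ((1 : Matrix (Fin n) (Fin n) ℂ) - Aᴴ * A) := by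
    apply inv_eq_right_inv
    rw [← mul_assoc]; exact hLamSq
  have part2 : (A * Lam) * Lam⁻¹ = A := by
    rw [hLinv, ← mul_assoc, mul_assoc A Lam Lam, mul_assoc A (Lam * Lam), hLamSq, mul_one]
  have hC : ((1 : Matrix (Fin n) (Fin n) ℂ) - A * Aᴴ) * (Lamb * Lamb) = 1 := mul_eq_one_comm.mp hLambSq
  have hB : ((1 : Matrix (Fin n) (Fin n) ℂ) - Aᴴ * A) * (Lam * Lam) = 1 := mul_eq_one_comm.mp hLamSq
  have hTsq : Lamᵀ * Lamᵀ * ((1 : Matrix (Fin n) (Fin n) ℂ) - A * Aᴴ) = 1 := by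
    have h := congrArg Matrix.transpose hB
    simp only [transpose_mul, transpose_sub, transpose_one, hA, hAH] at h
    exact h
  have hT : Lamᵀ = Lamb := by
    refine (open scoped MatrixOrder Matrix.Norms.L2Operator in (CFC.sq_eq_sq_iff Lamᵀ Lamb hLam.transpose.posSemidef.nonneg hLamb.posSemidef.nonneg).mp ?_)
    have h : Lamᵀ * Lamᵀ = Lamᵀ * Lamᵀ * (((1 : Matrix (Fin n) (Fin n) ℂ) - A * Aᴴ) * (Lamb * Lamb)) := by
      rw [hC, mul_one]
    rw [← mul_assoc, hTsq, one_mul] at h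
    rw [pow_two, pow_two, h]
  have hTT : Lambᵀ = Lam := by rw [← hT, transpose_transpose]
  have hbinv1 : Lamb⁻¹ = Lamb * ((1 : Matrix (Fin n) (Fin n) ℂ) - A * Aᴴ) := by
    apply inv_eq_right_inv; rw [← mul_assoc]; exact hLambSq
  have hbinv2 : Lamb⁻¹ = ((1 : Matrix (Fin n) (Fin n) ℂ) - A * Aᴴ) * Lamb := by
    apply inv_eq_left_inv; rw [mul_assoc]; exact hC
  have kLamb : Lamb * (((1 : Matrix (Fin n) (Fin n) ℂ) - A * Aᴴ) * Lamb) = 1 := by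
    rw [← hbinv2, hbinv1, ← mul_assoc]; exact hLambSq
  have hinv1 : Lam⁻¹ = Lam * ((1 : Matrix (Fin n) (Fin n) ℂ) - Aᴴ * A) := hLinv
  have hinv2 : Lam⁻¹ = ((1 : Matrix (Fin n) (Fin n) ℂ) - Aᴴ * A) * Lam := by
    apply inv_eq_left_inv; rw [mul_assoc]; exact hB
  have kLam : Lam * (((1 : Matrix (Fin n) (Fin n) ℂ) - Aᴴ * A) * Lam) = 1 := by
    rw [← hinv2, hinv1, ← mul_assoc]; exact hLamSq
  refine ⟨?_, part2⟩
  rw [fromBlocks_transpose, fromBlocks_multiply, fromBlocks_multiply]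
  rw [fromBlocks_inj]
  simp only [mul_zero, zero_add, add_zero, mul_one, mul_neg_one, transpose_mul, hA, hAH,
    hT, hTT, neg_mul, Matrix.neg_mul, Matrix.mul_neg, mul_assoc]
  have k2 : Lamb * Lamb - Lamb * (A * (Aᴴ * Lamb)) = 1 := by
    have h := kLamb
    simp only [sub_mul, one_mul, mul_sub, mul_assoc] at h
    exact h
  have k3 : Lam * Lam - Lam * (Aᴴ * (A * Lam)) = 1 := by
    have h := kLam
    simp only [sub_mul, one_mul, mul_sub, mul_assoc] at h
    exact h
  refine ⟨by simp, ?_, ?_, by simp⟩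
  · rw [neg_add_eq_sub]; exact k2
  · rw [neg_add_eq_sub, ← neg_sub, k3]
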